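/- Let K₁ ≥ 1, and for k = 0,…,K₁−1 let D_k be an n×n real diagonal matrix with all diagonal entries in [−1,1] and W_k a d'×d' real matrix with nonnegative diagonal entries; assume s := ∑_{k=0}^{K₁−1} ‖W_kᵀ‖_∞ < 1. Let X be an n×d real matrix, V₀ a d×d' real matrix, and for k = 1,…,K₂−1 let E_k be an n×n real diagonal matrix with diagonal entries in [−1,1] and V_k a d×d' real matrix. Let Y* be the unique solution of Y* = ∑_{k=0}^{K₁−1} D_k Y* W_k + X V₀ and set O* = Y* + ∑_{k=1}^{K₂−1} E_k X V_k. Then max_{i,j} |O*_{ij}| ≤ ( ‖V₀ᵀ‖_∞ / (1 − s) + ∑_{k=1}^{K₂−1} ‖V_kᵀ‖_∞ ) · max_{i,j} |X_{ij}|. -/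

import Mathlib

open scoped Matrix

/-- The ℓ∞–ℓ∞ operator norm of a real matrix: the maximum over rows of the
sum of absolute values of the entries in that row. -/
noncomputable def infNorm {m n : Type*} [Fintype m] [Fintype n]
    (A : Matrix m n ℝ) : ℝ :=
  ⨆ i, ∑ j, |A i j|

lemma supAbs_nonneg {m n : Type*} [Fintype m] [Fintype n] (A : Matrix m n ℝ) :
    0 ≤ ⨆ i, ⨆ j, |A i j| :=
  Real.iSup_nonneg fun i => Real.iSup_nonneg fun j => abs_nonneg _

lemma infNorm_nonneg {m n : Type*} [Fintype m] [Fintype n] (A : Matrix m n ℝ) :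
    0 ≤ infNorm A :=
  Real.iSup_nonneg fun i => Finset.sum_nonneg fun j _ => abs_nonneg _

lemma abs_entry_le_sup {m n : Type*} [Fintype m] [Fintype n] (A : Matrix m n ℝ)
    (i : m) (j : n) : |A i j| ≤ ⨆ i, ⨆ j, |A i j| := by
  refine le_trans ?_ (le_ciSup (f := fun i => ⨆ j, |A i j|)
    (Set.Finite.bddAbove (Set.finite_range _)) i)
  exact le_ciSup (f := fun j => |A i j|) (Set.Finite.bddAbove (Set.finite_range _)) j

lemma col_sum_le {m n : Type*} [Fintype m] [Fintype n] (A : Matrix m n ℝ)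
    (j : n) : ∑ l, |A l j| ≤ infNorm Aᵀ := by
  have : ∑ l, |A l j| = ∑ l, |Aᵀ j l| := by simp [Matrix.transpose_apply]
  rw [this]
  exact le_ciSup (f := fun j => ∑ l, |Aᵀ j l|) (Set.Finite.bddAbove (Set.finite_range _)) j

lemma mul_entry_le {m p q : Type*} [Fintype m] [Fintype p] [Fintype q]
    (A : Matrix m p ℝ) (B : Matrix p q ℝ) (i : m) (j : q) :
    |(A * B) i j| ≤ (⨆ i, ⨆ j, |A i j|) * infNorm Bᵀ := by
  set M := ⨆ i, ⨆ j, |A i j| with hM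
  calc |(A * B) i j| = |∑ l, A i l * B l j| := by rw [Matrix.mul_apply]
    _ ≤ ∑ l, |A i l * B l j| := Finset.abs_sum_le_sum_abs _ _
    _ ≤ ∑ l, M * |B l j| := by
        refine Finset.sum_le_sum fun l _ => ?_
        rw [abs_mul]
        exact mul_le_mul_of_nonneg_right (abs_entry_le_sup A i l) (abs_nonneg _)
    _ = M * ∑ l, |B l j| := by rw [Finset.mul_sum]
    _ ≤ M * infNorm Bᵀ :=
        mul_le_mul_of_nonneg_left (col_sum_le B j) (supAbs_nonneg A)

lemma diag_mul_apply {m p : Type*} [Fintype m] [Fintype p] [DecidableEq m]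
    (D : Matrix m m ℝ) (hD : D.IsDiag) (A : Matrix m p ℝ) (i : m) (j : p) :
    (D * A) i j = D i i * A i j := by
  rw [Matrix.mul_apply]
  exact Finset.sum_eq_single i (fun l _ hl => by rw [hD (Ne.symm hl), zero_mul])
    (fun h => absurd (Finset.mem_univ i) h)

/-- Upper bound on the limiting output of the spatio-temporal graph
convolution recursion: if `Y*` is the fixed point of
`Y* = ∑ k, D k * Y* * W k + X * V₀` and `O* = Y* + ∑ k, E k * X * V k`, then
`max |O*_{ij}| ≤ (‖V₀ᵀ‖_∞ / (1 - s) + ∑ k, ‖V kᵀ‖_∞) · max |X_{ij}|`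
where `s = ∑ k, ‖(W k)ᵀ‖_∞ < 1`. -/
theorem stgc_limit_upper_bound {n d d' K₁ K₂ : ℕ} (hK₁ : 1 ≤ K₁)
    (D : Fin K₁ → Matrix (Fin n) (Fin n) ℝ)
    (hDdiag : ∀ k, (D k).IsDiag)
    (hDbound : ∀ k r, D k r r ∈ Set.Icc (-1 : ℝ) 1)
    (W : Fin K₁ → Matrix (Fin d') (Fin d') ℝ)
    (hWdiag : ∀ k i, 0 ≤ W k i i)
    (hW : ∑ k, infNorm ((W k)ᵀ) < 1)
    (X : Matrix (Fin n) (Fin d) ℝ) (V0 : Matrix (Fin d) (Fin d') ℝ)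
    (E : Fin (K₂ - 1) → Matrix (Fin n) (Fin n) ℝ)
    (hEdiag : ∀ k, (E k).IsDiag)
    (hEbound : ∀ k r, E k r r ∈ Set.Icc (-1 : ℝ) 1)
    (V : Fin (K₂ - 1) → Matrix (Fin d) (Fin d') ℝ)
    (Ystar : Matrix (Fin n) (Fin d') ℝ)
    (hYstar : Ystar = ∑ k, D k * Ystar * W k + X * V0) :
    (⨆ i, ⨆ j, |(Ystar + ∑ k, E k * X * V k) i j|) ≤
      (infNorm V0ᵀ / (1 - ∑ k, infNorm ((W k)ᵀ)) + ∑ k, infNorm ((V k)ᵀ)) *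
        ⨆ i, ⨆ j, |X i j| := by
  set s := ∑ k, infNorm ((W k)ᵀ) with hs
  have hs0 : 0 ≤ s := Finset.sum_nonneg fun k _ => infNorm_nonneg _
  have hs1 : 0 < 1 - s := by linarith
  set MX := ⨆ i, ⨆ j, |X i j| with hMX
  set MY := ⨆ i, ⨆ j, |Ystar i j| with hMY
  have hMXnn : 0 ≤ MX := supAbs_nonneg X
  -- key recursion bound
  have hrec : MY ≤ s * MY + MX * infNorm V0ᵀ := by
    have hbd : 0 ≤ s * MY + MX * infNorm V0ᵀ :=
      add_nonneg (mul_nonneg hs0 (supAbs_nonneg _))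
        (mul_nonneg hMXnn (infNorm_nonneg _))
    refine Real.iSup_le (fun i => Real.iSup_le (fun j => ?_) hbd) hbd
    have : |Ystar i j| ≤ ∑ k, |((D k * Ystar * W k)) i j| + |(X * V0) i j| := by
      conv_lhs => rw [hYstar]
      rw [Matrix.add_apply, Matrix.sum_apply]
      exact le_trans (abs_add_le _ _)
        (add_le_add_left (Finset.abs_sum_le_sum_abs _ _) _)
    refine le_trans this (add_le_add ?_ (mul_entry_le X V0 i j))
    calc ∑ k, |(D k * Ystar * W k) i j|
        ≤ ∑ k, infNorm ((W k)ᵀ) * MY := by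
          refine Finset.sum_le_sum fun k _ => ?_
          have h1 : (D k * Ystar * W k) i j = D k i i * (Ystar * W k) i j := by
            rw [Matrix.mul_assoc]
            exact diag_mul_apply _ (hDdiag k) _ i j
          rw [h1, abs_mul]
          have hD1 : |D k i i| ≤ 1 := abs_le.mpr (hDbound k i)
          calc |D k i i| * |(Ystar * W k) i j|
              ≤ 1 * |(Ystar * W k) i j| :=
                mul_le_mul_of_nonneg_right hD1 (abs_nonneg _)
            _ = |(Ystar * W k) i j| := one_mul _
            _ ≤ MY * infNorm ((W k)ᵀ) := mul_entry_le Ystar (W k) i j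
            _ = infNorm ((W k)ᵀ) * MY := mul_comm _ _
      _ = s * MY := by rw [← Finset.sum_mul]
  have hYbound : MY ≤ infNorm V0ᵀ / (1 - s) * MX := by
    rw [div_mul_eq_mul_div, le_div_iff₀ hs1]
    nlinarith
  -- final bound
  have hbd2 : 0 ≤ (infNorm V0ᵀ / (1 - s) + ∑ k, infNorm ((V k)ᵀ)) * MX := by
    apply mul_nonneg _ hMXnn
    exact add_nonneg (div_nonneg (infNorm_nonneg _) hs1.le)
      (Finset.sum_nonneg fun k _ => infNorm_nonneg _)
  refine Real.iSup_le (fun i => Real.iSup_le (fun j => ?_) hbd2) hbd2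
  have h1 : |(Ystar + ∑ k, E k * X * V k) i j|
      ≤ MY + ∑ k, MX * infNorm ((V k)ᵀ) := by
    rw [Matrix.add_apply, Matrix.sum_apply]
    refine le_trans (abs_add_le _ _) (add_le_add (abs_entry_le_sup _ i j) ?_)
    refine le_trans (Finset.abs_sum_le_sum_abs _ _) (Finset.sum_le_sum fun k _ => ?_)
    have h2 : (E k * X * V k) i j = E k i i * (X * V k) i j := by
      rw [Matrix.mul_assoc]
      exact diag_mul_apply _ (hEdiag k) _ i j
    rw [h2, abs_mul]
    have hE1 : |E k i i| ≤ 1 := abs_le.mpr (hEbound k i)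
    calc |E k i i| * |(X * V k) i j|
        ≤ 1 * |(X * V k) i j| := mul_le_mul_of_nonneg_right hE1 (abs_nonneg _)
      _ = |(X * V k) i j| := one_mul _
      _ ≤ MX * infNorm ((V k)ᵀ) := mul_entry_le X (V k) i j
  refine le_trans h1 ?_
  rw [add_mul, Finset.sum_mul]
  refine add_le_add hYbound (le_of_eq ?_)
  exact Finset.sum_congr rfl fun k _ => (mul_comm _ _)
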